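/- Let P be a real polynomial of degree at most N+1 satisfying the interpolation conditions P(−1/x_a) = 2 d_a s_a x_a ∏_{b∈𝒜, b≠a} (1 − x_b/x_a) for every a ∈ 𝒜. Let F : ℝ → ℝ be twice differentiable with F''(z) = (∏_{a∈𝒜} (1 + x_a z)^{d_a − 1})·P(z) for all z, F(−1) = F(1) = 0, F'(−1) = 2·p_c(−1), and F'(1) = −2·p_c(1). Then F(z) > 0 for every z ∈ (−1, 1). -/

import Mathlib

open Polynomial Set

set_option maxHeartbeats 3000000 in
/-- Guan–Hwang root counting: if `s_a x_a ≥ 0` for all `a`, `P` is a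
polynomial of degree ≤ N+1 satisfying the interpolation conditions, and `F` solves
`F''(z) = (∏_a (1 + x_a z)^{d_a - 1}) P(z)` with `F(±1) = 0`, `F'(±1) = ∓2 p_c(±1)`,
then `F > 0` on `(-1,1)`. -/
theorem stmt3 {ι : Type*} [Fintype ι] [DecidableEq ι] [Nonempty ι]
    (x : ι → ℝ) (hx0 : ∀ a, 0 < |x a|) (hx1 : ∀ a, |x a| < 1)
    (hxinj : Function.Injective x)
    (d : ι → ℕ) (hd : ∀ a, 1 ≤ d a)
    (s : ι → ℝ) (hs : ∀ a, 0 ≤ s a * x a)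
    (pc : ℝ → ℝ) (hpc : ∀ t, pc t = ∏ a, (1 + x a * t) ^ d a)
    (P : Polynomial ℝ) (hdeg : P.degree ≤ (Fintype.card ι + 1 : ℕ))
    (hint : ∀ a, P.eval (-1 / x a) = 2 * (d a : ℝ) * s a * x a *
      ∏ b ∈ Finset.univ.erase a, (1 - x b / x a))
    (F F' : ℝ → ℝ)
    (hF' : ∀ z, HasDerivAt F (F' z) z)
    (hF'' : ∀ z, HasDerivAt F' ((∏ a, (1 + x a * z) ^ (d a - 1)) * P.eval z) z)
    (hFm : F (-1) = 0) (hFp : F 1 = 0)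
    (hF'm : F' (-1) = 2 * pc (-1)) (hF'p : F' 1 = -2 * pc 1) :
    ∀ z ∈ Set.Ioo (-1:ℝ) 1, 0 < F z := by
  classical
  set N := Fintype.card ι with hN
  have hxne : ∀ a, x a ≠ 0 := fun a => abs_pos.mp (hx0 a)
  -- positivity of linear factors on [-1,1]
  have hlin : ∀ (a : ι) (z : ℝ), z ∈ Set.Icc (-1:ℝ) 1 → 0 < 1 + x a * z := by
    intro a z hz
    have h1 : |x a * z| < 1 := by
      rw [abs_mul]
      calc |x a| * |z| ≤ |x a| * 1 := by
            apply mul_le_mul_of_nonneg_left _ (abs_nonneg _)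
            rw [abs_le]; exact ⟨hz.1, hz.2⟩
        _ < 1 := by simpa using hx1 a
    have := (abs_lt.mp h1).1
    linarith
  have hRpos : ∀ z ∈ Set.Icc (-1:ℝ) 1, 0 < ∏ a, (1 + x a * z) ^ (d a - 1) :=
    fun z hz => Finset.prod_pos fun a _ => pow_pos (hlin a z hz) _
  have hPipos : ∀ z ∈ Set.Icc (-1:ℝ) 1, 0 < ∏ a, (1 + x a * z) :=
    fun z hz => Finset.prod_pos fun a _ => hlin a z hz
  -- boundary derivative signs
  have hF'mpos : 0 < F' (-1) := by
    rw [hF'm, hpc]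
    have : 0 < ∏ a, (1 + x a * (-1)) ^ d a :=
      Finset.prod_pos fun a _ => pow_pos (hlin a (-1) (by norm_num)) _
    linarith
  have hF'pneg : F' 1 < 0 := by
    rw [hF'p, hpc]
    have : 0 < ∏ a, (1 + x a * (1:ℝ)) ^ d a :=
      Finset.prod_pos fun a _ => pow_pos (hlin a 1 (by norm_num)) _
    linarith
  -- continuity
  have hcontF : Continuous F :=
    continuous_iff_continuousAt.mpr fun z => (hF' z).continuousAt
  have hcontF' : Continuous F' :=
    continuous_iff_continuousAt.mpr fun z => (hF'' z).continuousAt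
  have hdiffF' : Differentiable ℝ F' := fun z => (hF'' z).differentiableAt
  ----------------------------------------------------------------
  -- ALGEBRAIC PART : no -,+,- sign pattern of P on [-1,1]
  ----------------------------------------------------------------
  -- the coefficients of the interpolation data
  have hnopat : ∀ t1 t2 t3 : ℝ, -1 ≤ t1 → t1 < t2 → t2 < t3 → t3 ≤ 1 →
      P.eval t1 < 0 → P.eval t3 < 0 → P.eval t2 ≤ 0 := by
    set c : ι → ℝ := fun a => 2 * (d a : ℝ) * s a * x a with hcdef
    have hcnn : ∀ a, 0 ≤ c a := by
      intro a
      have h1 : (0:ℝ) ≤ (d a : ℝ) := Nat.cast_nonneg _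
      have h2 := hs a
      simp only [hcdef]
      nlinarith
    set P₀ : Polynomial ℝ := ∑ a, Polynomial.C (c a) *
        ∏ b ∈ Finset.univ.erase a, (1 + Polynomial.C (x b) * Polynomial.X) with hP0def
    have hP0eval : ∀ t : ℝ, P₀.eval t = ∑ a, c a *
        ∏ b ∈ Finset.univ.erase a, (1 + x b * t) := by
      intro t
      simp [hP0def, Polynomial.eval_finset_sum, Polynomial.eval_prod]
    have hroot : ∀ a : ι, (P - P₀).eval (-1 / x a) = 0 := by
      intro a
      have hxa : (1:ℝ) + x a * (-1 / x a) = 0 := by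
        have h := hxne a
        field_simp
        ring
      have hsum : P₀.eval (-1 / x a) = c a *
          ∏ b ∈ Finset.univ.erase a, (1 + x b * (-1 / x a)) := by
        rw [hP0eval]
        apply Finset.sum_eq_single a
        · intro b _ hba
          have hmem : a ∈ Finset.univ.erase b :=
            Finset.mem_erase.mpr ⟨Ne.symm hba, Finset.mem_univ a⟩
          rw [Finset.prod_eq_zero hmem hxa, mul_zero]
        · intro habs; exact absurd (Finset.mem_univ a) habs
      rw [Polynomial.eval_sub, hsum, hint a]
      have he : ∀ b : ι, (1 : ℝ) + x b * (-1 / x a) = 1 - x b / x a := by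
        intro b; ring
      rw [Finset.prod_congr rfl (fun b _ => he b)]
      simp only [hcdef]
      ring
    have hyinj : ∀ a b : ι, -1 / x a = -1 / x b → a = b := by
      intro a b hab
      apply hxinj
      have ha := hxne a
      have hb := hxne b
      field_simp at hab
      linarith
    have hPine : (∏ a : ι, (Polynomial.X - Polynomial.C (-1 / x a))) ≠ 0 :=
      (monic_prod_of_monic _ _ fun a _ => Polynomial.monic_X_sub_C _).ne_zero
    have hdvd : (∏ a : ι, (Polynomial.X - Polynomial.C (-1 / x a))) ∣ (P - P₀) := by
      rcases eq_or_ne (P - P₀) 0 with h0 | h0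
      · rw [h0]; exact dvd_zero _
      · have hrw : (∏ a : ι, (Polynomial.X - Polynomial.C (-1 / x a))) =
            ((Finset.univ.val.map fun a : ι => -1 / x a).map
              fun r => Polynomial.X - Polynomial.C r).prod := by
          rw [Multiset.map_map]
          rfl
        rw [hrw, Multiset.prod_X_sub_C_dvd_iff_le_roots h0]
        apply Multiset.le_iff_count.mpr
        intro r
        by_cases hr : r ∈ Finset.univ.val.map fun a : ι => -1 / x a
        · have hnd : (Finset.univ.val.map fun a : ι => -1 / x a).Nodup :=
            Finset.univ.nodup.map fun a b hab => hyinj a b hab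
          have hc1 : (Finset.univ.val.map fun a : ι => -1 / x a).count r ≤ 1 :=
            Multiset.nodup_iff_count_le_one.mp hnd r
          obtain ⟨a, _, ha⟩ := Multiset.mem_map.mp hr
          have hrmem : r ∈ (P - P₀).roots := by
            rw [Polynomial.mem_roots h0]
            rw [← ha]
            exact hroot a
          have := Multiset.one_le_count_iff_mem.mpr hrmem
          omega
        · rw [Multiset.count_eq_zero_of_notMem hr]
          exact Nat.zero_le _
    obtain ⟨q, hq⟩ := hdvd
    have hPideg : (∏ a : ι, (Polynomial.X - Polynomial.C (-1 / x a))).natDegree = N := by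
      rw [Polynomial.natDegree_prod _ _ (fun a _ => Polynomial.X_sub_C_ne_zero _)]
      simp [Polynomial.natDegree_X_sub_C, hN, Finset.card_univ]
    have hP0deg : P₀.natDegree ≤ N + 1 := by
      apply Polynomial.natDegree_sum_le_of_forall_le
      intro a _
      refine le_trans (Polynomial.natDegree_mul_le) ?_
      simp only [Polynomial.natDegree_C, zero_add]
      refine le_trans (Polynomial.natDegree_prod_le _ _) ?_
      refine le_trans (Finset.sum_le_card_nsmul _ _ 1 ?_) ?_
      · intro b _
        refine le_trans (Polynomial.natDegree_add_le _ _) ?_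
        refine max_le (by simp) ?_
        refine le_trans (Polynomial.natDegree_mul_le) ?_
        simp
      · simp only [smul_eq_mul, mul_one]
        have := Finset.card_erase_le (a := a) (s := (Finset.univ : Finset ι))
        calc (Finset.univ.erase a).card ≤ Finset.univ.card := Finset.card_erase_le
          _ ≤ N + 1 := by simp [hN, Finset.card_univ]
    have hqdeg : q.natDegree ≤ 1 := by
      rcases eq_or_ne q 0 with h0 | h0
      · simp [h0]
      · have hD0 : P - P₀ ≠ 0 := by
          rw [hq]
          exact mul_ne_zero hPine h0
        have hPdeg' : P.natDegree ≤ N + 1 := Polynomial.natDegree_le_iff_degree_le.mpr hdeg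
        have hDdeg : (P - P₀).natDegree ≤ N + 1 :=
          le_trans (Polynomial.natDegree_sub_le _ _) (max_le hPdeg' hP0deg)
        rw [hq, Polynomial.natDegree_mul hPine h0, hPideg] at hDdeg
        omega
    -- the rational representation on [-1,1]
    set g : ℝ → ℝ := fun t =>
      (∑ a, c a * (1 + x a * t)⁻¹) + q.eval t * (∏ a, x a)⁻¹ with hgdef
    have hid : ∀ t : ℝ, t ∈ Set.Icc (-1:ℝ) 1 →
        P.eval t = (∏ a, (1 + x a * t)) * g t := by
      intro t ht
      have hfac : ∀ a : ι, (0:ℝ) < 1 + x a * t := fun a => hlin a t ht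
      have hfne : ∀ a : ι, (1:ℝ) + x a * t ≠ 0 := fun a => (hfac a).ne'
      have hPt : P = P₀ + (∏ a : ι, (Polynomial.X - Polynomial.C (-1 / x a))) * q := by
        rw [← hq]; ring
      rw [hPt, Polynomial.eval_add, Polynomial.eval_mul, Polynomial.eval_prod, hP0eval]
      have e1 : ∀ a : ι, Polynomial.eval t (Polynomial.X - Polynomial.C (-1 / x a))
          = (1 + x a * t) / x a := by
        intro a
        have := hxne a
        simp only [Polynomial.eval_sub, Polynomial.eval_X, Polynomial.eval_C]
        field_simp
        ring
      rw [Finset.prod_congr rfl (fun a _ => e1 a), Finset.prod_div_distrib]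
      have e2 : ∀ a : ι, (∏ b, (1 + x b * t)) * (1 + x a * t)⁻¹
          = ∏ b ∈ Finset.univ.erase a, (1 + x b * t) := by
        intro a
        rw [← Finset.mul_prod_erase Finset.univ _ (Finset.mem_univ a),
          mul_comm (1 + x a * t), mul_assoc, mul_inv_cancel₀ (hfne a), mul_one]
      simp only [hgdef]
      rw [mul_add, Finset.mul_sum]
      congr 1
      · apply Finset.sum_congr rfl
        intro a _
        rw [← e2 a]
        ring
      · rw [div_eq_mul_inv]
        ring
    -- convexity of g on [-1,1]
    have hconv : ConvexOn ℝ (Set.Icc (-1:ℝ) 1) g := by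
      apply ConvexOn.add
      · have hone : ∀ a : ι, ConvexOn ℝ (Set.Icc (-1:ℝ) 1)
            (fun t => c a * (1 + x a * t)⁻¹) := by
          intro a
          have hbase := (convexOn_zpow (-1 : ℤ)).comp_affineMap
            (AffineMap.lineMap (1:ℝ) (1 + x a))
          have hsub : Set.Icc (-1:ℝ) 1 ⊆
              (AffineMap.lineMap (1:ℝ) (1 + x a)) ⁻¹' Set.Ioi 0 := by
            intro t ht
            have := hlin a t ht
            simp only [Set.mem_preimage, AffineMap.lineMap_apply, Set.mem_Ioi]
            simp only [smul_eq_mul, vsub_eq_sub, vadd_eq_add]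
            nlinarith
          have h2 := (hbase.subset hsub (convex_Icc _ _)).smul (hcnn a)
          convert h2 using 1
          pick_goal -1
          funext t
          simp only [Function.comp_apply, AffineMap.lineMap_apply, smul_eq_mul,
            vsub_eq_sub, vadd_eq_add, zpow_neg, zpow_one]
          ring_nf
          all_goals rfl
        have hsum : ∀ vs : Finset ι, ConvexOn ℝ (Set.Icc (-1:ℝ) 1)
            (fun t => ∑ a ∈ vs, c a * (1 + x a * t)⁻¹) := by
          intro vs
          induction vs using Finset.cons_induction with
          | empty => simpa using convexOn_const (0:ℝ) (convex_Icc (-1:ℝ) 1)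
          | cons a vs ha ih =>
            simp only [Finset.sum_cons]
            exact (hone a).add ih
        exact hsum Finset.univ
      · have hq' : ∀ t : ℝ, q.eval t = q.coeff 1 * t + q.coeff 0 := by
          intro t
          conv_lhs => rw [Polynomial.eq_X_add_C_of_natDegree_le_one hqdeg]
          simp
        refine ⟨convex_Icc _ _, ?_⟩
        intro u hu v hv a b ha hb hab
        simp only [smul_eq_mul]
        rw [hq', hq', hq']
        apply le_of_eq
        have hb' : b = 1 - a := by linarith
        rw [hb']
        ring
    -- finish
    intro t1 t2 t3 h1 h12 h23 h3 hn1 hn3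
    have hm1 : t1 ∈ Set.Icc (-1:ℝ) 1 := ⟨h1, by linarith⟩
    have hm2 : t2 ∈ Set.Icc (-1:ℝ) 1 := ⟨by linarith, by linarith⟩
    have hm3 : t3 ∈ Set.Icc (-1:ℝ) 1 := ⟨by linarith, h3⟩
    have hg1 : g t1 < 0 := by
      have hp := hPipos t1 hm1
      have he := hid t1 hm1
      nlinarith
    have hg3 : g t3 < 0 := by
      have hp := hPipos t3 hm3
      have he := hid t3 hm3
      nlinarith
    by_contra hpos
    push_neg at hpos
    have hg2 : 0 < g t2 := by
      have hp := hPipos t2 hm2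
      have he := hid t2 hm2
      nlinarith
    have hden : (0:ℝ) < t3 - t1 := by linarith
    set la : ℝ := (t3 - t2) / (t3 - t1) with hladef
    set lb : ℝ := (t2 - t1) / (t3 - t1) with hlbdef
    have hla : 0 < la := div_pos (by linarith) hden
    have hlb : 0 < lb := div_pos (by linarith) hden
    have hlab : la + lb = 1 := by
      simp only [hladef, hlbdef]
      field_simp
      ring
    have hcomb : la • t1 + lb • t3 = t2 := by
      simp only [smul_eq_mul, hladef, hlbdef]
      field_simp
      ring
    have := hconv.2 hm1 hm3 hla.le hlb.le hlab
    rw [hcomb] at this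
    simp only [smul_eq_mul] at this
    nlinarith
  ----------------------------------------------------------------
  -- ANALYTIC TOOLKIT
  ----------------------------------------------------------------
  -- mean value theorem helper
  have mvt : ∀ a b : ℝ, a < b → ∃ c ∈ Set.Ioo a b, F' c = (F b - F a) / (b - a) :=
    fun a b hab => exists_hasDerivAt_eq_slope F F' hab hcontF.continuousOn
      (fun z _ => hF' z)
  -- monotonicity of F' from sign of P
  have monoF' : ∀ u v : ℝ, -1 ≤ u → v ≤ 1 →
      (∀ z ∈ Set.Ioo u v, 0 ≤ P.eval z) → MonotoneOn F' (Set.Icc u v) := by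
    intro u v hu hv hP
    apply monotoneOn_of_deriv_nonneg (convex_Icc u v) hcontF'.continuousOn
      hdiffF'.differentiableOn
    intro z hz
    rw [interior_Icc] at hz
    rw [(hF'' z).deriv]
    have hz' : z ∈ Set.Icc (-1:ℝ) 1 := ⟨le_trans hu hz.1.le, le_trans hz.2.le hv⟩
    exact mul_nonneg (hRpos z hz').le (hP z hz)
  have antF' : ∀ u v : ℝ, -1 ≤ u → v ≤ 1 →
      (∀ z ∈ Set.Ioo u v, P.eval z ≤ 0) → AntitoneOn F' (Set.Icc u v) := by
    intro u v hu hv hP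
    apply antitoneOn_of_deriv_nonpos (convex_Icc u v) hcontF'.continuousOn
      hdiffF'.differentiableOn
    intro z hz
    rw [interior_Icc] at hz
    rw [(hF'' z).deriv]
    have hz' : z ∈ Set.Icc (-1:ℝ) 1 := ⟨le_trans hu hz.1.le, le_trans hz.2.le hv⟩
    exact mul_nonpos_of_nonneg_of_nonpos (hRpos z hz').le (hP z hz)
  -- positivity near the endpoints
  have posL : ∀ w : ℝ, -1 < w → ∃ t, -1 < t ∧ t < w ∧ 0 < F t := by
    intro w hw
    have hev : ∀ᶠ t in nhds (-1:ℝ), 0 < F' t :=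
      hcontF'.continuousAt.eventually (eventually_gt_nhds hF'mpos)
    obtain ⟨ε, hε, hball⟩ := Metric.eventually_nhds_iff.mp hev
    set t0 : ℝ := -1 + min ε (w + 1) / 2 with ht0def
    have hmin : 0 < min ε (w + 1) := lt_min hε (by linarith)
    have ht0a : -1 < t0 := by simp only [ht0def]; linarith
    have ht0b : t0 < w := by
      have : min ε (w + 1) ≤ w + 1 := min_le_right _ _
      simp only [ht0def]; linarith
    obtain ⟨c, hc, hceq⟩ := mvt (-1) t0 ht0a
    have hcd : dist c (-1) < ε := by
      rw [Real.dist_eq, abs_lt]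
      have h1 := hc.1
      have h2 := hc.2
      have : min ε (w + 1) ≤ ε := min_le_left _ _
      constructor <;> simp only [ht0def] at h2 ⊢ <;> linarith
    have h3 : 0 < F' c := hball hcd
    have h2 : F' c * (t0 - (-1)) = F t0 - F (-1) :=
      (eq_div_iff (show t0 - (-1) ≠ 0 by intro h; simp at h; linarith)).mp hceq
    refine ⟨t0, ht0a, ht0b, ?_⟩
    nlinarith [mul_pos h3 (show (0:ℝ) < t0 - (-1) by linarith), hFm]
  have posR : ∀ w : ℝ, w < 1 → ∃ t, w < t ∧ t < 1 ∧ 0 < F t := by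
    intro w hw
    have hev : ∀ᶠ t in nhds (1:ℝ), F' t < 0 :=
      hcontF'.continuousAt.eventually (eventually_lt_nhds hF'pneg)
    obtain ⟨ε, hε, hball⟩ := Metric.eventually_nhds_iff.mp hev
    set t0 : ℝ := 1 - min ε (1 - w) / 2 with ht0def
    have hmin : 0 < min ε (1 - w) := lt_min hε (by linarith)
    have ht0a : t0 < 1 := by simp only [ht0def]; linarith
    have ht0b : w < t0 := by
      have : min ε (1 - w) ≤ 1 - w := min_le_right _ _
      simp only [ht0def]; linarith
    obtain ⟨c, hc, hceq⟩ := mvt t0 1 ht0a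
    have hcd : dist c 1 < ε := by
      rw [Real.dist_eq, abs_lt]
      have h1 := hc.1
      have h2 := hc.2
      have : min ε (1 - w) ≤ ε := min_le_left _ _
      constructor <;> simp only [ht0def] at h1 ⊢ <;> linarith
    have h3 : F' c < 0 := hball hcd
    have h2 : F' c * (1 - t0) = F 1 - F t0 :=
      (eq_div_iff (show (1:ℝ) - t0 ≠ 0 by intro h; linarith [sub_eq_zero.mp h])).mp hceq
    refine ⟨t0, ht0b, ht0a, ?_⟩
    nlinarith [mul_neg_of_neg_of_pos h3 (show (0:ℝ) < 1 - t0 by linarith), hFp]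
  -- convexity claims
  have claim1 : ∀ u : ℝ, u ≤ 1 → (∀ z, -1 ≤ z → z < u → 0 ≤ P.eval z) →
      ∀ z, -1 < z → z ≤ u → 0 < F z := by
    intro u hu hP z hz1 hz2
    obtain ⟨c, hc, hceq⟩ := mvt (-1) z hz1
    have hmono := monoF' (-1) u le_rfl hu (fun w hw => hP w hw.1.le hw.2)
    have hcmem : c ∈ Set.Icc (-1:ℝ) u := ⟨hc.1.le, le_trans hc.2.le hz2⟩
    have h1 : F' (-1) ≤ F' c := hmono (by constructor <;> [norm_num; linarith]) hcmem hc.1.le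
    have h2 : F' c * (z - (-1)) = F z - F (-1) :=
      (eq_div_iff (show z - (-1) ≠ 0 by intro h; simp at h; linarith)).mp hceq
    have h3 : 0 < F' c := lt_of_lt_of_le hF'mpos h1
    nlinarith [mul_pos h3 (show (0:ℝ) < z - (-1) by linarith), hFm]
  have claim2 : ∀ u : ℝ, -1 ≤ u → (∀ z, u < z → z ≤ 1 → 0 ≤ P.eval z) →
      ∀ z, u ≤ z → z < 1 → 0 < F z := by
    intro u hu hP z hz1 hz2
    obtain ⟨c, hc, hceq⟩ := mvt z 1 hz2
    have hmono := monoF' u 1 hu le_rfl (fun w hw => hP w hw.1 hw.2.le)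
    have hcmem : c ∈ Set.Icc u (1:ℝ) := ⟨le_trans hz1 hc.1.le, hc.2.le⟩
    have h1 : F' c ≤ F' 1 := hmono hcmem ⟨by linarith, le_rfl⟩ hc.2.le
    have h2 : F' c * (1 - z) = F 1 - F z :=
      (eq_div_iff (show (1:ℝ) - z ≠ 0 by intro h; linarith [sub_eq_zero.mp h])).mp hceq
    have h3 : F' c < 0 := lt_of_le_of_lt h1 hF'pneg
    nlinarith [mul_neg_of_neg_of_pos h3 (show (0:ℝ) < 1 - z by linarith), hFp]
  ----------------------------------------------------------------
  -- MAIN ARGUMENT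
  ----------------------------------------------------------------
  intro z hz
  by_cases hA : ∃ t ∈ Set.Icc (-1:ℝ) 1, P.eval t < 0
  · set A : Set ℝ := {t | t ∈ Set.Icc (-1:ℝ) 1 ∧ P.eval t < 0} with hAdef
    have hAne : A.Nonempty := by
      obtain ⟨t, ht, ht'⟩ := hA; exact ⟨t, ht, ht'⟩
    have hAsub : A ⊆ Set.Icc (-1:ℝ) 1 := fun t ht => ht.1
    have hAbdd1 : BddBelow A := (bddBelow_Icc).mono hAsub
    have hAbdd2 : BddAbove A := (bddAbove_Icc).mono hAsub
    set u1 := sInf A with hu1def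
    set u2 := sSup A with hu2def
    have hu1lb : -1 ≤ u1 := le_csInf hAne fun t ht => ht.1.1
    have hu2ub : u2 ≤ 1 := csSup_le hAne fun t ht => ht.1.2
    have hu12 : u1 ≤ u2 := by
      obtain ⟨t, ht⟩ := hAne
      exact le_trans (csInf_le hAbdd1 ht) (le_csSup hAbdd2 ht)
    have hu1ub : u1 ≤ 1 := le_trans hu12 hu2ub
    have hu2lb : -1 ≤ u2 := le_trans hu1lb hu12
    have hPleft : ∀ t, -1 ≤ t → t < u1 → 0 ≤ P.eval t := by
      intro t ht1 ht2
      by_contra hneg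
      push_neg at hneg
      have : t ∈ A := ⟨⟨ht1, le_trans ht2.le hu1ub⟩, hneg⟩
      exact absurd (csInf_le hAbdd1 this) (not_le.mpr ht2)
    have hPright : ∀ t, u2 < t → t ≤ 1 → 0 ≤ P.eval t := by
      intro t ht1 ht2
      by_contra hneg
      push_neg at hneg
      have : t ∈ A := ⟨⟨le_trans hu2lb ht1.le, ht2⟩, hneg⟩
      exact absurd (le_csSup hAbdd2 this) (not_le.mpr ht1)
    have hPmid : ∀ t, u1 < t → t < u2 → P.eval t ≤ 0 := by
      intro t ht1 ht2
      obtain ⟨t1, ht1A, ht1lt⟩ := (csInf_lt_iff hAbdd1 hAne).mp ht1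
      obtain ⟨t3, ht3A, ht3gt⟩ := (lt_csSup_iff hAbdd2 hAne).mp ht2
      exact hnopat t1 t t3 ht1A.1.1 ht1lt ht3gt ht3A.1.2 ht1A.2 ht3A.2
    rcases le_or_gt z u1 with hcase | hcase
    · exact claim1 u1 hu1ub hPleft z hz.1 hcase
    rcases le_or_gt u2 z with hcase2 | hcase2
    · exact claim2 u2 hu2lb hPright z hcase2 hz.2
    -- middle region: F concave on [u1,u2]
    · have hant := antF' u1 u2 hu1lb hu2ub (fun w hw => hPmid w hw.1 hw.2)
      -- find tL ∈ [u1, z) with 0 < F tL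
      have htL : ∃ tL, u1 ≤ tL ∧ tL < z ∧ 0 < F tL := by
        rcases eq_or_lt_of_le hu1lb with heq | hlt
        · obtain ⟨t, ht1, ht2, ht3⟩ := posL z hz.1
          exact ⟨t, by rw [← heq]; exact ht1.le, ht2, ht3⟩
        · exact ⟨u1, le_rfl, hcase, claim1 u1 hu1ub hPleft u1 hlt le_rfl⟩
      have htR : ∃ tR, z < tR ∧ tR ≤ u2 ∧ 0 < F tR := by
        rcases eq_or_lt_of_le hu2ub with heq | hlt
        · obtain ⟨t, ht1, ht2, ht3⟩ := posR z hz.2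
          exact ⟨t, ht1, by rw [heq]; exact ht2.le, ht3⟩
        · exact ⟨u2, hcase2, le_rfl, claim2 u2 hu2lb hPright u2 le_rfl hlt⟩
      obtain ⟨tL, htL1, htL2, htL3⟩ := htL
      obtain ⟨tR, htR1, htR2, htR3⟩ := htR
      by_contra hFz
      push_neg at hFz
      obtain ⟨c1, hc1, hc1eq⟩ := mvt tL z htL2
      obtain ⟨c2, hc2, hc2eq⟩ := mvt z tR htR1
      have hc1neg : F' c1 < 0 := by
        rw [hc1eq]
        apply div_neg_of_neg_of_pos <;> linarith
      have hc2pos : 0 < F' c2 := by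
        rw [hc2eq]
        apply div_pos <;> linarith
      have hc1mem : c1 ∈ Set.Icc u1 u2 :=
        ⟨le_trans htL1 hc1.1.le, le_trans hc1.2.le hcase2.le⟩
      have hc2mem : c2 ∈ Set.Icc u1 u2 :=
        ⟨le_trans hcase.le hc2.1.le, le_trans hc2.2.le htR2⟩
      have h12 : c1 ≤ c2 := le_trans hc1.2.le hc2.1.le
      have := hant hc1mem hc2mem h12
      linarith
  · push_neg at hA
    have := claim1 1 le_rfl (fun t ht1 ht2 => hA t ⟨ht1, ht2.le⟩) z hz.1 hz.2.le
    exact this
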